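/- arXiv:2512.06974 — 4 statements merged into one kernel-verified Lean document; each statement's English description precedes it below -/
import Mathlib

section
/- Define recursively the sequence of symmetric matrices V_0 = (1) (1×1) and V_{p+1} = [[V_p, -V_p], [-V_p, 2V_p]] (block matrix of size 2^{p+1}). Then the spectrum of V_{p+1} equals { ((3+√5)/2)·λ : λ ∈ Sp(V_p) } ∪ { ((3-√5)/2)·λ : λ ∈ Sp(V_p) }, counted with multiplicity. In particular, the largest eigenvalue of V_p is ((3+√5)/2)^p and the smallest is ((3-√5)/2)^p. -/
open Polynomial Matrix

/-- The multiset of eigenvalues of `V p`. -/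
noncomputable def specMul : ℕ → Multiset ℝ
  | 0 => {1}
  | (p + 1) => (specMul p).map (fun x => (3 + Real.sqrt 5) / 2 * x) +
      (specMul p).map (fun x => (3 - Real.sqrt 5) / 2 * x)

lemma specMul_card (p : ℕ) : Multiset.card (specMul p) = 2 ^ p := by
  induction p with
  | zero => rfl
  | succ p ih => simp [specMul, ih]; ring

lemma sqrt5_lt_3 : Real.sqrt 5 < 3 := by
  nlinarith [Real.sq_sqrt (show (0:ℝ) ≤ 5 by norm_num), Real.sqrt_nonneg 5]

lemma mu_pos : 0 < (3 + Real.sqrt 5) / 2 := by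
  have := Real.sqrt_nonneg 5; linarith

lemma nu_pos : 0 < (3 - Real.sqrt 5) / 2 := by
  have := sqrt5_lt_3; linarith

lemma nu_le_mu : (3 - Real.sqrt 5) / 2 ≤ (3 + Real.sqrt 5) / 2 := by
  have := Real.sqrt_nonneg 5; linarith

lemma specMul_facts (p : ℕ) :
    ((3 + Real.sqrt 5) / 2) ^ p ∈ specMul p ∧ ((3 - Real.sqrt 5) / 2) ^ p ∈ specMul p ∧
      ∀ x ∈ specMul p, 0 < x ∧ ((3 - Real.sqrt 5) / 2) ^ p ≤ x ∧ x ≤ ((3 + Real.sqrt 5) / 2) ^ p := by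
  set μ := (3 + Real.sqrt 5) / 2 with hμ
  set ν := (3 - Real.sqrt 5) / 2 with hν
  have hμ0 : 0 < μ := mu_pos
  have hν0 : 0 < ν := nu_pos
  have hνμ : ν ≤ μ := nu_le_mu
  induction p with
  | zero => simp [specMul]
  | succ p ih =>
    obtain ⟨h1, h2, h3⟩ := ih
    refine ⟨?_, ?_, ?_⟩
    · exact Multiset.mem_add.mpr (Or.inl (Multiset.mem_map.mpr ⟨μ ^ p, h1, by ring⟩))
    · exact Multiset.mem_add.mpr (Or.inr (Multiset.mem_map.mpr ⟨ν ^ p, h2, by ring⟩))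
    · intro x hx
      rcases Multiset.mem_add.mp hx with h | h
      · obtain ⟨y, hy, rfl⟩ := Multiset.mem_map.mp h
        obtain ⟨hy0, hyl, hyu⟩ := h3 y hy
        refine ⟨mul_pos hμ0 hy0, ?_, ?_⟩
        · rw [pow_succ]
          nlinarith
        · rw [pow_succ]
          nlinarith
      · obtain ⟨y, hy, rfl⟩ := Multiset.mem_map.mp h
        obtain ⟨hy0, hyl, hyu⟩ := h3 y hy
        refine ⟨mul_pos hν0 hy0, ?_, ?_⟩
        · rw [pow_succ]
          nlinarith
        · rw [pow_succ]
          nlinarith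

lemma charpoly_conj_aux {n : Type*} [Fintype n] [DecidableEq n] {R : Type*} [CommRing R]
    (S S' B : Matrix n n R) (h : S' * S = 1) :
    (S' * B * S).charpoly = B.charpoly := by
  have key : charmatrix (S' * B * S) =
      (C : R →+* R[X]).mapMatrix S' * charmatrix B * (C : R →+* R[X]).mapMatrix S := by
    simp only [charmatrix, Matrix.mul_sub, Matrix.sub_mul]
    congr 1
    · rw [scalar_apply, ← smul_one_eq_diagonal, mul_smul_comm, smul_mul_assoc,
        Matrix.mul_one, ← _root_.map_mul, h, _root_.map_one]
    · rw [← _root_.map_mul, ← _root_.map_mul]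
  rw [Matrix.charpoly, Matrix.charpoly, key, det_mul, det_mul]
  have hdet : ((C : R →+* R[X]).mapMatrix S).det * ((C : R →+* R[X]).mapMatrix S').det = 1 := by
    rw [← det_mul, ← _root_.map_mul, mul_eq_one_comm.mp h, _root_.map_one, det_one]
  calc ((C : R →+* R[X]).mapMatrix S').det * (charmatrix B).det *
        ((C : R →+* R[X]).mapMatrix S).det
      = (((C : R →+* R[X]).mapMatrix S).det * ((C : R →+* R[X]).mapMatrix S').det) *
        (charmatrix B).det := by ring
    _ = (charmatrix B).det := by rw [hdet, one_mul]

lemma charpoly_block {n : Type*} [Fintype n] [DecidableEq n] (A : Matrix n n ℝ) :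
    (fromBlocks A (-A) (-A) ((2:ℝ) • A)).charpoly =
      (((3 + Real.sqrt 5) / 2) • A).charpoly * (((3 - Real.sqrt 5) / 2) • A).charpoly := by
  set s := Real.sqrt 5 with hs
  have hs2 : s ^ 2 = 5 := Real.sq_sqrt (by norm_num)
  have hs0 : 0 < s := Real.sqrt_pos.mpr (by norm_num)
  have hs3 : s ^ 3 = 5 * s := by rw [show s ^ 3 = s ^ 2 * s by ring, hs2]
  have hs4 : s ^ 4 = 25 := by rw [show s ^ 4 = s ^ 2 * s ^ 2 by ring, hs2]; norm_num
  have hs5 : s ^ 5 = 25 * s := by rw [show s ^ 5 = s ^ 2 * s ^ 2 * s by ring, hs2]; norm_num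
  set μ := (3 + s) / 2 with hμ
  set ν := (3 - s) / 2 with hν
  set S : Matrix (n ⊕ n) (n ⊕ n) ℝ :=
    fromBlocks 1 1 ((1 - μ) • 1) ((1 - ν) • 1) with hS
  set S' : Matrix (n ⊕ n) (n ⊕ n) ℝ :=
    fromBlocks (((1 - ν) / s) • 1) ((-1 / s) • 1) (((μ - 1) / s) • 1) ((1 / s) • 1) with hS'
  have hSS : S' * S = 1 := by
    rw [hS, hS', fromBlocks_multiply]
    simp only [Matrix.smul_mul, Matrix.mul_smul, Matrix.one_mul, Matrix.mul_one, smul_smul,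
      ← add_smul]
    rw [show (1 - ν) / s + (1 - μ) * (-1 / s) = 1 by
        simp only [hμ, hν]; field_simp; try ring_nf; try linarith [hs2, hs3, hs4, hs5],
      show (1 - ν) / s + (1 - ν) * (-1 / s) = 0 by
        simp only [hμ, hν]; field_simp; try ring_nf; try linarith [hs2, hs3, hs4, hs5],
      show (μ - 1) / s + (1 - μ) * (1 / s) = 0 by
        simp only [hμ, hν]; field_simp; try ring_nf; try linarith [hs2, hs3, hs4, hs5],
      show (μ - 1) / s + (1 - ν) * (1 / s) = 1 by
        simp only [hμ, hν]; field_simp; try ring_nf; try linarith [hs2, hs3, hs4, hs5],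
      one_smul, zero_smul, fromBlocks_one]
  have hconj : S' * (fromBlocks A (-A) (-A) ((2:ℝ) • A)) * S =
      fromBlocks (μ • A) ((0:ℝ) • A) ((0:ℝ) • A) (ν • A) := by
    rw [hS, hS', fromBlocks_multiply, fromBlocks_multiply]
    simp only [Matrix.smul_mul, Matrix.mul_smul, Matrix.one_mul, Matrix.mul_one,
      Matrix.mul_neg, Matrix.neg_mul, smul_smul, smul_neg, ← add_smul, ← neg_smul]
    rw [show (1 - ν) / s + -(-1 / s) + (1 - μ) * (-((1 - ν) / s) + 2 * (-1 / s)) = μ by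
        simp only [hμ, hν]; field_simp; try ring_nf; try linarith [hs2, hs3, hs4, hs5],
      show (1 - ν) / s + -(-1 / s) + (1 - ν) * (-((1 - ν) / s) + 2 * (-1 / s)) = 0 by
        simp only [hμ, hν]; field_simp; try ring_nf; try linarith [hs2, hs3, hs4, hs5],
      show (μ - 1) / s + -(1 / s) + (1 - μ) * (-((μ - 1) / s) + 2 * (1 / s)) = 0 by
        simp only [hμ, hν]; field_simp; try ring_nf; try linarith [hs2, hs3, hs4, hs5],
      show (μ - 1) / s + -(1 / s) + (1 - ν) * (-((μ - 1) / s) + 2 * (1 / s)) = ν by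
        simp only [hμ, hν]; field_simp; try ring_nf; try linarith [hs2, hs3, hs4, hs5]]
  rw [zero_smul] at hconj
  rw [← charpoly_conj_aux S S' (fromBlocks A (-A) (-A) ((2:ℝ) • A)) hSS, hconj,
    Matrix.charpoly_fromBlocks_zero₂₁]

lemma charpoly_smul_of_prod {n : Type*} [Fintype n] [DecidableEq n]
    (A : Matrix n n ℝ) (c : ℝ) (hc : c ≠ 0) (R : Multiset ℝ)
    (hA : A.charpoly = (R.map fun l => X - C l).prod)
    (hcard : Multiset.card R = Fintype.card n) :
    (c • A).charpoly = ((R.map fun l => c * l).map fun l => X - C l).prod := by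
  classical
  set φ : ℝ[X] →+* ℝ[X] := eval₂RingHom Polynomial.C (C c⁻¹ * X) with hφ
  have hcc : (C c : ℝ[X]) * C c⁻¹ = 1 := by
    rw [← C_mul, mul_inv_cancel₀ hc, C_1]
  have hfac : ∀ l : ℝ, (C c : ℝ[X]) * (C c⁻¹ * X - C l) = X - C (c * l) := fun l => by
    rw [mul_sub, ← mul_assoc, hcc, one_mul, ← C_mul]
  have key : charmatrix (c • A) = (C c : ℝ[X]) • ((charmatrix A).map φ) := by
    ext i j : 2
    by_cases h : i = j
    · subst h
      simp only [charmatrix_apply_eq, Matrix.smul_apply, Matrix.map_apply, smul_eq_mul,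
        hφ, coe_eval₂RingHom, eval₂_sub, eval₂_X, eval₂_C]
      rw [hfac]
    · simp only [charmatrix_apply_ne _ _ _ h, Matrix.smul_apply, Matrix.map_apply, smul_eq_mul,
        hφ, coe_eval₂RingHom, eval₂_neg, eval₂_C, mul_neg, ← C_mul]
  have hmapdet : ((charmatrix A).map φ).det = φ A.charpoly := (RingHom.map_det φ _).symm
  rw [Matrix.charpoly, key, Matrix.det_smul, hmapdet, hA, _root_.map_multiset_prod,
    Multiset.map_map]
  have h1 : (Multiset.map (φ ∘ fun l => X - C l) R) = R.map fun l => C c⁻¹ * X - C l := by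
    apply Multiset.map_congr rfl
    intro x _
    simp [hφ, coe_eval₂RingHom, eval₂_sub, eval₂_X, eval₂_C]
  rw [h1, ← hcard]
  rw [show (C c : ℝ[X]) ^ Multiset.card R = (R.map fun _ => (C c : ℝ[X])).prod by
    rw [Multiset.map_const', Multiset.prod_replicate]]
  rw [← Multiset.prod_map_mul, Multiset.map_map]
  congr 1
  apply Multiset.map_congr rfl
  intro x _
  simp only [Function.comp_apply]
  exact hfac x

lemma main_charpoly
    (V : (p : ℕ) → Matrix (Fin (2 ^ p)) (Fin (2 ^ p)) ℝ)
    (h0 : V 0 = 1)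
    (hrec : ∀ p, V (p + 1) =
      Matrix.reindex
        (finSumFinEquiv.trans (finCongr (by rw [pow_succ]; ring)))
        (finSumFinEquiv.trans (finCongr (by rw [pow_succ]; ring)))
        (Matrix.fromBlocks (V p) (-(V p)) (-(V p)) ((2 : ℝ) • V p))) :
    ∀ p, (V p).charpoly = ((specMul p).map fun l => X - C l).prod := by
  intro p
  induction p with
  | zero =>
    rw [h0, Matrix.charpoly_of_upperTriangular _ Matrix.blockTriangular_one]
    simp [specMul, Matrix.one_apply, Finset.prod_const]
  | succ p ih =>
    have hcard : Multiset.card (specMul p) = Fintype.card (Fin (2 ^ p)) := by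
      rw [Fintype.card_fin]; exact specMul_card p
    rw [hrec p, Matrix.charpoly_reindex, charpoly_block,
      charpoly_smul_of_prod _ _ (ne_of_gt mu_pos) _ ih hcard,
      charpoly_smul_of_prod _ _ (ne_of_gt nu_pos) _ ih hcard]
    show _ = ((specMul (p+1)).map fun l => X - C l).prod
    rw [show specMul (p+1) = (specMul p).map (fun x => (3 + Real.sqrt 5) / 2 * x) +
        (specMul p).map (fun x => (3 - Real.sqrt 5) / 2 * x) from rfl,
      Multiset.map_add, Multiset.prod_add]

lemma main_roots
    (V : (p : ℕ) → Matrix (Fin (2 ^ p)) (Fin (2 ^ p)) ℝ)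
    (h0 : V 0 = 1)
    (hrec : ∀ p, V (p + 1) =
      Matrix.reindex
        (finSumFinEquiv.trans (finCongr (by rw [pow_succ]; ring)))
        (finSumFinEquiv.trans (finCongr (by rw [pow_succ]; ring)))
        (Matrix.fromBlocks (V p) (-(V p)) (-(V p)) ((2 : ℝ) • V p))) :
    ∀ p, (V p).charpoly.roots = specMul p := by
  intro p
  rw [main_charpoly V h0 hrec p]
  exact roots_multiset_prod_X_sub_C _



/-- Spectrum of the recursively defined matrices `V_0 = (1)`,
`V_{p+1} = [[V_p, -V_p], [-V_p, 2V_p]]`: the eigenvalues (with multiplicity,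
given as roots of the characteristic polynomial) of `V_{p+1}` are obtained from
those of `V_p` by multiplication by `(3±√5)/2`; consequently the largest
eigenvalue of `V_p` is `((3+√5)/2)^p` and the smallest is `((3-√5)/2)^p`. -/
theorem spectrum_block_recursion
    (V : (p : ℕ) → Matrix (Fin (2 ^ p)) (Fin (2 ^ p)) ℝ)
    (h0 : V 0 = 1)
    (hrec : ∀ p, V (p + 1) =
      Matrix.reindex
        (finSumFinEquiv.trans (finCongr (by rw [pow_succ]; ring)))
        (finSumFinEquiv.trans (finCongr (by rw [pow_succ]; ring)))
        (Matrix.fromBlocks (V p) (-(V p)) (-(V p)) ((2 : ℝ) • V p))) :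
    (∀ p, (V (p + 1)).charpoly.roots =
        (V p).charpoly.roots.map (fun lam => (3 + Real.sqrt 5) / 2 * lam) +
        (V p).charpoly.roots.map (fun lam => (3 - Real.sqrt 5) / 2 * lam))
    ∧ (∀ p, ((3 + Real.sqrt 5) / 2) ^ p ∈ (V p).charpoly.roots
        ∧ ((3 - Real.sqrt 5) / 2) ^ p ∈ (V p).charpoly.roots
        ∧ ∀ lam ∈ (V p).charpoly.roots,
            ((3 - Real.sqrt 5) / 2) ^ p ≤ lam ∧ lam ≤ ((3 + Real.sqrt 5) / 2) ^ p) := by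
  have hr := main_roots V h0 hrec
  constructor
  · intro p
    rw [hr p, hr (p + 1)]
    rfl
  · intro p
    obtain ⟨h1, h2, h3⟩ := specMul_facts p
    rw [hr p]
    exact ⟨h1, h2, fun lam hlam => ⟨(h3 lam hlam).2.1, (h3 lam hlam).2.2⟩⟩
end

section
/- If λ is an eigenvalue of V_p with eigenvector u, and 𝔞 ∈ ℝ satisfies 𝔞² + 𝔞 - 1 = 0 (i.e. 𝔞 = (-1 ± √5)/2), then the vector (u, 𝔞u) is an eigenvector of V_{p+1} = [[V_p, -V_p], [-V_p, 2V_p]] with eigenvalue (1 - 𝔞)λ = ((3 ∓ √5)/2)λ. -/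
/-- If `λ` is an eigenvalue of `V` with eigenvector `u` and `𝔞² + 𝔞 - 1 = 0`,
then `(u, 𝔞u)` is an eigenvector of the block matrix `[[V, -V], [-V, 2V]]`
with eigenvalue `(1 - 𝔞)λ`. -/
theorem block_eigenvector (n : ℕ) (V : Matrix (Fin n) (Fin n) ℝ)
    (lam : ℝ) (u : Fin n → ℝ) (hu : u ≠ 0)
    (heig : V.mulVec u = lam • u)
    (a : ℝ) (ha : a ^ 2 + a - 1 = 0) :
    (Matrix.fromBlocks V (-V) (-V) ((2 : ℝ) • V)).mulVec (Sum.elim u (a • u)) =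
      ((1 - a) * lam) • Sum.elim u (a • u) ∧ Sum.elim u (a • u) ≠ 0 := by
  constructor
  · funext x
    cases x with
    | inl i =>
      simp [Matrix.fromBlocks_mulVec, Matrix.mulVec_smul, heig, Matrix.neg_mulVec]
      ring
    | inr i =>
      simp [Matrix.fromBlocks_mulVec, Matrix.mulVec_smul, heig, Matrix.neg_mulVec,
        Matrix.smul_mulVec]
      linear_combination (lam * u i) * ha
  · intro h
    apply hu
    funext i
    have := congrFun h (Sum.inl i)
    simpa using this
end

section
/- Let X and X' be independent identically distributed random vectors in ℝ^p with independent coordinates, f : ℝ^p → ℝ measurable with E[f(X)²] < ∞, Y = f(X), and for u ⊆ {1,…,p} let Y^{(u)} = f(X^{(u)}) where X^{(u),i} = X^i for i ∈ u and X^{(u),i} = X'^i for i ∉ u. Then Var(E[Y | X^i, i ∈ u]) = Cov(Y, Y^{(u)}). -/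
open MeasureTheory ProbabilityTheory
open scoped ENNReal NNReal

section PickFreezeAuxSection
namespace PickFreezeAux

variable {Ω : Type*} [MeasurableSpace Ω] {μ : Measure Ω}

lemma iIndepFun_precomp {ι κ : Type*} {f : ι → Ω → ℝ}
    (h : iIndepFun (m := fun _ : ι => (inferInstance : MeasurableSpace ℝ)) f μ)
    (φ : κ → ι) (hφ : Function.Injective φ) :
    iIndepFun (m := fun _ : κ => (inferInstance : MeasurableSpace ℝ)) (fun k => f (φ k)) μ := by
  classical
  rw [ProbabilityTheory.iIndepFun_iff_measure_inter_preimage_eq_mul] at h ⊢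
  intro S sets hsets
  set bigsets : ι → Set ℝ := fun i => ⋂ k ∈ S.filter (fun k => φ k = i), sets k with hbig
  have hkey : ∀ k₀ ∈ S, bigsets (φ k₀) = sets k₀ := by
    intro k₀ hk₀
    have hfil : S.filter (fun k => φ k = φ k₀) = {k₀} := by
      ext k
      simp only [Finset.mem_filter, Finset.mem_singleton, hφ.eq_iff]
      exact ⟨fun h => h.2, fun h => ⟨h ▸ hk₀, h⟩⟩
    show (⋂ k ∈ S.filter (fun k => φ k = φ k₀), sets k) = sets k₀
    rw [hfil]
    simp
  have hmeas : ∀ i, i ∈ S.image φ → MeasurableSet (bigsets i) := by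
    intro i _
    refine Set.Finite.measurableSet_biInter (Finset.finite_toSet _) ?_
    intro k hk
    exact hsets k (Finset.mem_of_mem_filter k hk)
  have hmain := h (S.image φ) hmeas
  rw [Finset.prod_image (fun a _ b _ hab => hφ hab)] at hmain
  have hInter : (⋂ i ∈ S.image φ, f i ⁻¹' bigsets i) = ⋂ k ∈ S, f (φ k) ⁻¹' sets k := by
    ext ω
    simp only [Set.mem_iInter, Finset.mem_image, Set.mem_preimage]
    constructor
    · intro hx k hk
      have := hx (φ k) ⟨k, hk, rfl⟩
      rwa [hkey k hk] at this
    · rintro hx i ⟨k, hk, rfl⟩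
      rw [hkey k hk]
      exact hx k hk
  rw [hInter] at hmain
  rw [hmain]
  refine Finset.prod_congr rfl fun k hk => ?_
  rw [hkey k hk]

lemma map_pi_eq {ι : Type*} [Fintype ι] {f : ι → Ω → ℝ} [IsProbabilityMeasure μ]
    (hmeas : ∀ i, Measurable (f i))
    (h : iIndepFun (m := fun _ : ι => (inferInstance : MeasurableSpace ℝ)) f μ) :
    Measure.map (fun ω i => f i ω) μ = Measure.pi (fun i => Measure.map (f i) μ) := by
  haveI : ∀ i, IsProbabilityMeasure (Measure.map (f i) μ) :=
    fun i => Measure.isProbabilityMeasure_map (hmeas i).aemeasurable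
  refine (Measure.pi_eq fun s hs => ?_).symm
  rw [Measure.map_apply (measurable_pi_lambda _ hmeas) (MeasurableSet.univ_pi hs)]
  have hpre : (fun ω i => f i ω) ⁻¹' Set.pi Set.univ s = ⋂ i ∈ Finset.univ, f i ⁻¹' s i := by
    ext ω; simp [Set.mem_pi]
  rw [hpre, h.measure_inter_preimage_eq_mul Finset.univ (fun i _ => hs i)]
  exact Finset.prod_congr rfl fun i _ => (Measure.map_apply (hmeas i) (hs i)).symm

lemma memℒp_integrable_mul {α : Type*} [MeasurableSpace α] {ρ : Measure α} {f g : α → ℝ}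
    (hf : MemLp f 2 ρ) (hg : MemLp g 2 ρ) : Integrable (fun x => f x * g x) ρ := by
  rw [← memLp_one_iff_integrable]
  have h12 : (1 : ℝ≥0∞) / 1 = 1 / 2 + 1 / 2 := by
    rw [one_div_one]; exact (ENNReal.add_halves 1).symm
  haveI : ENNReal.HolderTriple 2 2 1 := ⟨by rw [inv_one]; exact ENNReal.inv_two_add_inv_two⟩
  exact hg.smul (r := 1) hf

lemma memℒp_two_integral {α β : Type*} [MeasurableSpace α] [MeasurableSpace β]
    {ρ : Measure α} {ν : Measure β} [SigmaFinite ρ] [IsProbabilityMeasure ν]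
    {g : α × β → ℝ} (hgm : Measurable g) (hg : MemLp g 2 (ρ.prod ν)) :
    MemLp (fun x => ∫ y, g (x, y) ∂ν) 2 ρ := by
  have hsm : StronglyMeasurable (fun x => ∫ y, g (x, y) ∂ν) :=
    hgm.stronglyMeasurable.integral_prod_right'
  rw [memLp_two_iff_integrable_sq hsm.aestronglyMeasurable]
  have hg2 : Integrable (fun q => g q ^ 2) (ρ.prod ν) := hg.integrable_sq
  have hdom : Integrable (fun x => ∫ y, g (x, y) ^ 2 ∂ν) ρ := hg2.integral_prod_left
  have hae : ∀ᵐ x ∂ρ, Integrable (fun y => g (x, y) ^ 2) ν := hg2.prod_right_ae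
  refine Integrable.mono' hdom (hsm.pow 2).aestronglyMeasurable ?_
  filter_upwards [hae] with x hx
  have hφm : AEStronglyMeasurable (fun y => g (x, y)) ν :=
    (hgm.comp (measurable_prodMk_left)).aestronglyMeasurable
  have hφ2 : MemLp (fun y => g (x, y)) 2 ν := (memLp_two_iff_integrable_sq hφm).2 hx
  have hvar := variance_nonneg (fun y => g (x, y)) ν
  rw [variance_eq_sub hφ2] at hvar
  have hb : (∫ y, g (x, y) ∂ν) ^ 2 ≤ ∫ y, g (x, y) ^ 2 ∂ν := by
    have : (ν[(fun y => g (x, y)) ^ 2] : ℝ) = ∫ y, g (x, y) ^ 2 ∂ν := by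
      simp [Pi.pow_apply]
    nlinarith [hvar]
  calc ‖(∫ y, g (x, y) ∂ν) ^ 2‖ = (∫ y, g (x, y) ∂ν) ^ 2 := by
        rw [Real.norm_eq_abs, abs_of_nonneg (sq_nonneg _)]
    _ ≤ ∫ y, g (x, y) ^ 2 ∂ν := hb

lemma variance_congr {X Y : Ω → ℝ} (h : X =ᵐ[μ] Y) : variance X μ = variance Y μ := by
  unfold ProbabilityTheory.variance ProbabilityTheory.evariance
  rw [integral_congr_ae h]
  congr 1
  apply lintegral_congr_ae
  filter_upwards [h] with ω hω
  rw [hω]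

end PickFreezeAux
end PickFreezeAuxSection

/-- Pick-Freeze identity: with `X, X'` independent with independent coordinates and
identically distributed, `Y = f(X)` and `Y^{(u)} = f(X^{(u)})` where `X^{(u)}`
keeps the coordinates of `X` in `u` and those of `X'` outside `u`, one has
`Var(E[Y | X^i, i ∈ u]) = Cov(Y, Y^{(u)})`. -/
theorem pick_freeze (p : ℕ) {Ω : Type*} [MeasureSpace Ω]
    [IsProbabilityMeasure (ℙ : Measure Ω)]
    (X X' : Ω → Fin p → ℝ) (f : (Fin p → ℝ) → ℝ)
    (hf : Measurable f)
    (hX : ∀ i, Measurable fun ω => X ω i)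
    (hX' : ∀ i, Measurable fun ω => X' ω i)
    (hindep : iIndepFun (m := fun _ : Fin p ⊕ Fin p => (inferInstance : MeasurableSpace ℝ))
      (Sum.elim (fun i ω => X ω i) (fun i ω => X' ω i)) ℙ)
    (hid : ∀ i, IdentDistrib (fun ω => X ω i) (fun ω => X' ω i) ℙ ℙ)
    (hL2 : MemLp (fun ω => f (X ω)) 2 ℙ)
    (u : Finset (Fin p)) :
    variance
      (ℙ[(fun ω => f (X ω)) |
        ⨆ i ∈ u, MeasurableSpace.comap (fun ω => X ω i) inferInstance]) ℙ
    = (∫ ω, f (X ω) * f (fun i => if i ∈ u then X ω i else X' ω i) ∂ℙ)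
      - (∫ ω, f (X ω) ∂ℙ) *
        (∫ ω, f (fun i => if i ∈ u then X ω i else X' ω i) ∂ℙ) := by
  classical
  have hXm : Measurable X := measurable_pi_lambda _ hX
  have hX'm : Measurable X' := measurable_pi_lambda _ hX'
  set ν : Fin p → Measure ℝ := fun i => Measure.map (fun ω => X ω i) ℙ with hν_def
  haveI hνP : ∀ i, IsProbabilityMeasure (ν i) :=
    fun i => Measure.isProbabilityMeasure_map (hX i).aemeasurable
  set μX : Measure (Fin p → ℝ) := Measure.map X ℙ with hμX_def
  haveI : IsProbabilityMeasure μX := Measure.isProbabilityMeasure_map hXm.aemeasurable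
  -- coordinate independence and product structure of the laws
  have hXfam : iIndepFun (m := fun _ : Fin p => (inferInstance : MeasurableSpace ℝ))
      (fun i ω => X ω i) ℙ := PickFreezeAux.iIndepFun_precomp hindep Sum.inl Sum.inl_injective
  have hX'fam : iIndepFun (m := fun _ : Fin p => (inferInstance : MeasurableSpace ℝ))
      (fun i ω => X' ω i) ℙ := PickFreezeAux.iIndepFun_precomp hindep Sum.inr Sum.inr_injective
  have hmapX : μX = Measure.pi ν := PickFreezeAux.map_pi_eq hX hXfam
  have hmapX' : Measure.map X' ℙ = μX := by
    have h1 := PickFreezeAux.map_pi_eq hX' hX'fam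
    have h2 : (fun i => Measure.map (fun ω => X' ω i) ℙ) = ν :=
      funext fun i => ((hid i).map_eq).symm
    rw [h2] at h1
    rw [hmapX]
    exact h1
  set P : Measure ((Fin p → ℝ) × (Fin p → ℝ)) := μX.prod μX with hP_def
  haveI : IsProbabilityMeasure P := by rw [hP_def]; infer_instance
  -- independence of X and X'
  have hIF : IndepFun X X' ℙ := by
    set S : Finset (Fin p ⊕ Fin p) := Finset.univ.map ⟨Sum.inl, Sum.inl_injective⟩ with hS
    set T : Finset (Fin p ⊕ Fin p) := Finset.univ.map ⟨Sum.inr, Sum.inr_injective⟩ with hT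
    have hST : Disjoint S T := by
      rw [Finset.disjoint_left]
      rintro a ha hb
      rw [hS, Finset.mem_map] at ha
      rw [hT, Finset.mem_map] at hb
      obtain ⟨x, -, rfl⟩ := ha
      obtain ⟨y, -, h⟩ := hb
      simp at h
    have hFm : ∀ i, Measurable (Sum.elim (fun i ω => X ω i) (fun i ω => X' ω i) i) := by
      rintro (i | i)
      · exact hX i
      · exact hX' i
    have h2 := hindep.indepFun_finset S T hST hFm
    have hΦS : Measurable fun (v : ↥S → ℝ) (j : Fin p) =>
        v ⟨Sum.inl j, by rw [hS, Finset.mem_map]; exact ⟨j, Finset.mem_univ j, rfl⟩⟩ :=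
      measurable_pi_lambda _ fun j => measurable_pi_apply _
    have hΦT : Measurable fun (v : ↥T → ℝ) (j : Fin p) =>
        v ⟨Sum.inr j, by rw [hT, Finset.mem_map]; exact ⟨j, Finset.mem_univ j, rfl⟩⟩ :=
      measurable_pi_lambda _ fun j => measurable_pi_apply _
    exact h2.comp hΦS hΦT
  have hpairm : Measurable fun ω => (X ω, X' ω) := hXm.prodMk hX'm
  have hpair : Measure.map (fun ω => (X ω, X' ω)) ℙ = P := by
    have h3 := (indepFun_iff_map_prod_eq_prod_map_map hXm.aemeasurable hX'm.aemeasurable).1 hIF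
    rw [h3, hmapX']
  -- the combination map
  set c : (Fin p → ℝ) × (Fin p → ℝ) → (Fin p → ℝ) :=
    fun q i => if i ∈ u then q.1 i else q.2 i with hc_def
  have hc : Measurable c := by
    refine measurable_pi_lambda _ fun i => ?_
    by_cases hi : i ∈ u
    · simp only [hc_def, if_pos hi]
      exact (measurable_pi_apply i).comp measurable_fst
    · simp only [hc_def, if_neg hi]
      exact (measurable_pi_apply i).comp measurable_snd
  have hK1 : Measure.map c P = μX := by
    rw [hP_def, hmapX]
    refine (Measure.pi_eq fun s hs => ?_).symm
    rw [Measure.map_apply hc (MeasurableSet.univ_pi hs)]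
    have hpre : c ⁻¹' Set.pi Set.univ s =
        (Set.pi Set.univ fun i => if i ∈ u then s i else Set.univ) ×ˢ
        (Set.pi Set.univ fun i => if i ∈ u then Set.univ else s i) := by
      ext q
      simp only [Set.mem_preimage, Set.mem_pi, Set.mem_univ, true_implies, Set.mem_prod, hc_def]
      constructor
      · intro hq
        constructor
        · intro i
          by_cases hi : i ∈ u
          · simpa [hi] using hq i
          · simp [hi]
        · intro i
          by_cases hi : i ∈ u
          · simp [hi]
          · simpa [hi] using hq i
      · rintro ⟨h1, h2⟩ i
        by_cases hi : i ∈ u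
        · simpa [hi] using h1 i
        · simpa [hi] using h2 i
    rw [hpre, Measure.prod_prod, Measure.pi_pi, Measure.pi_pi, ← Finset.prod_mul_distrib]
    refine Finset.prod_congr rfl fun i _ => ?_
    by_cases hi : i ∈ u <;> simp [hi]
  -- the conditional mean function
  set hfun : (Fin p → ℝ) → ℝ := fun x => ∫ y, f (c (x, y)) ∂μX with hh_def
  have hfc : Measurable fun q => f (c q) := hf.comp hc
  have hsm : StronglyMeasurable hfun := hfc.stronglyMeasurable.integral_prod_right'
  have hcc : ∀ (x y z : Fin p → ℝ), c (c (x, y), z) = c (x, z) := by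
    intro x y z; funext i; by_cases hi : i ∈ u <;> simp [hc_def, hi]
  have hdep : ∀ x y, hfun (c (x, y)) = hfun x := by
    intro x y
    refine integral_congr_ae (Filter.Eventually.of_forall fun z => ?_)
    show f (c (c (x, y), z)) = f (c (x, z))
    rw [hcc]
  -- the sigma-algebra
  set A : Ω → (↥u → ℝ) := fun ω (i : ↥u) => X ω i with hA_def
  have hAm : Measurable A := measurable_pi_lambda _ fun i => hX i
  have hm_eq : (⨆ i ∈ u, MeasurableSpace.comap (fun ω => X ω i) inferInstance)
      = MeasurableSpace.comap A MeasurableSpace.pi := by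
    apply le_antisymm
    · refine iSup₂_le fun i hi => ?_
      have he : (fun ω => X ω i) = (fun g : ↥u → ℝ => g ⟨i, hi⟩) ∘ A := rfl
      rw [he, ← MeasurableSpace.comap_comp]
      refine MeasurableSpace.comap_mono ?_
      exact le_iSup (fun j : ↥u =>
        MeasurableSpace.comap (fun g : ↥u → ℝ => g j) inferInstance) ⟨i, hi⟩
    · have hpi : (MeasurableSpace.pi : MeasurableSpace (↥u → ℝ)) =
          ⨆ j : ↥u, MeasurableSpace.comap (fun g : ↥u → ℝ => g j) inferInstance := rfl
      rw [hpi, MeasurableSpace.comap_iSup]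
      refine iSup_le fun j => ?_
      rw [MeasurableSpace.comap_comp]
      exact le_iSup₂ (f := fun i (_ : i ∈ u) =>
        MeasurableSpace.comap (fun ω => X ω i) inferInstance) j.1 j.2
  have hm_le : MeasurableSpace.comap A MeasurableSpace.pi ≤ MeasureSpace.toMeasurableSpace :=
    hAm.comap_le
  rw [hm_eq]
  -- integrability facts
  have hfL2 : MemLp f 2 μX :=
    (memLp_map_measure_iff hf.aestronglyMeasurable hXm.aemeasurable).2 hL2
  have hfcL2 : MemLp (fun q => f (c q)) 2 P := by
    have h1 : MemLp f 2 (Measure.map c P) := by rw [hK1]; exact hfL2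
    exact (memLp_map_measure_iff hf.aestronglyMeasurable hc.aemeasurable).1 h1
  have hhL2 : MemLp hfun 2 μX := PickFreezeAux.memℒp_two_integral hfc hfcL2
  have hhXL2 : MemLp (fun ω => hfun (X ω)) 2 ℙ :=
    (memLp_map_measure_iff hsm.aestronglyMeasurable hXm.aemeasurable).1 hhL2
  have hYint : Integrable (fun ω => f (X ω)) ℙ := hL2.integrable one_le_two
  have hhXint : Integrable (fun ω => hfun (X ω)) ℙ := hhXL2.integrable one_le_two
  have hfcInt : Integrable (fun q => f (c q)) P := hfcL2.integrable one_le_two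
  -- measurability with respect to m
  set extd : (↥u → ℝ) → (Fin p → ℝ) := fun a i => if hi : i ∈ u then a ⟨i, hi⟩ else 0
    with hextd_def
  have hextdm : Measurable extd := by
    refine measurable_pi_lambda _ fun i => ?_
    by_cases hi : i ∈ u
    · simp only [hextd_def, dif_pos hi]
      exact measurable_pi_apply _
    · simp only [hextd_def, dif_neg hi]
      exact measurable_const
  have hrestr : ∀ x : Fin p → ℝ, hfun (extd fun i : ↥u => x i) = hfun x := by
    intro x
    refine integral_congr_ae (Filter.Eventually.of_forall fun y => ?_)
    show f (c (extd fun i : ↥u => x i, y)) = f (c (x, y))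
    congr 1
    funext i
    by_cases hi : i ∈ u <;> simp [hc_def, hextd_def, hi]
  have hmeasM : Measurable[MeasurableSpace.comap A MeasurableSpace.pi] fun ω => hfun (X ω) := by
    have h1 : Measurable[MeasurableSpace.comap A MeasurableSpace.pi] A :=
      Measurable.of_comap_le le_rfl
    have h2 := (hsm.measurable.comp hextdm).comp h1
    have h3 : (fun ω => hfun (X ω)) = fun ω => hfun (extd (A ω)) := by
      funext ω
      exact (hrestr (X ω)).symm
    rw [h3]
    exact h2
  -- identification of the conditional expectation
  set rmap : (Fin p → ℝ) → (↥u → ℝ) := fun x i => x i with hrmap_def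
  have hrm : Measurable rmap := measurable_pi_lambda _ fun i => measurable_pi_apply _
  have hcond : ℙ[(fun ω => f (X ω)) | MeasurableSpace.comap A MeasurableSpace.pi]
      =ᵐ[ℙ] fun ω => hfun (X ω) := by
    refine (ae_eq_condExp_of_forall_setIntegral_eq hm_le hYint
      (fun s _ _ => hhXint.integrableOn) ?_ ?_).symm
    · intro s hs _
      obtain ⟨t, ht, rfl⟩ := hs
      set B : Set (Fin p → ℝ) := rmap ⁻¹' t with hB_def
      have hB : MeasurableSet B := hrm ht
      have e1 : ∫ ω in A ⁻¹' t, f (X ω) ∂ℙ = ∫ x in B, f x ∂μX :=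
        (setIntegral_map hB hf.aestronglyMeasurable hXm.aemeasurable).symm
      have e2 : ∫ ω in A ⁻¹' t, hfun (X ω) ∂ℙ = ∫ x in B, hfun x ∂μX :=
        (setIntegral_map hB hsm.aestronglyMeasurable hXm.aemeasurable).symm
      rw [e1, e2]
      have hBkey : ∀ q : (Fin p → ℝ) × (Fin p → ℝ), rmap (c q) = rmap q.1 := by
        intro q
        funext i
        simp [hrmap_def, hc_def, i.2]
      have hpreB : c ⁻¹' B = B ×ˢ Set.univ := by
        ext q
        simp only [hB_def, Set.mem_preimage, Set.mem_prod, Set.mem_univ, and_true]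
        rw [hBkey q]
      have e3 : ∫ x in B, f x ∂μX = ∫ q in B ×ˢ Set.univ, f (c q) ∂P := by
        conv_lhs => rw [← hK1]
        rw [setIntegral_map hB hf.aestronglyMeasurable hc.aemeasurable, hpreB]
      have hres : (μX.restrict B).prod μX = P.restrict (B ×ˢ Set.univ) := by
        rw [hP_def, ← Measure.prod_restrict, Measure.restrict_univ]
      have e4 : ∫ q in B ×ˢ Set.univ, f (c q) ∂P = ∫ x in B, hfun x ∂μX := by
        rw [← hres]
        rw [integral_prod _ (by rw [hres]; exact hfcInt.integrableOn)]
      rw [e3, e4]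
    · exact hmeasM.stronglyMeasurable.aestronglyMeasurable
  -- integral identities
  have hEY : ∫ ω, f (X ω) ∂ℙ = ∫ x, f x ∂μX :=
    (integral_map hXm.aemeasurable hf.aestronglyMeasurable).symm
  have hfmul : AEStronglyMeasurable (fun q => f q.1 * f (c q)) P :=
    ((hf.comp measurable_fst).mul hfc).aestronglyMeasurable
  have hfstL2 : MemLp (fun q : (Fin p → ℝ) × (Fin p → ℝ) => f q.1) 2 P := by
    have h1 : Measure.map Prod.fst P = μX := by
      rw [hP_def, Measure.map_fst_prod]
      simp
    have h2 : MemLp f 2 (Measure.map Prod.fst P) := by rw [h1]; exact hfL2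
    exact (memLp_map_measure_iff hf.aestronglyMeasurable measurable_fst.aemeasurable).1 h2
  have hprodInt : Integrable (fun q => f q.1 * f (c q)) P :=
    PickFreezeAux.memℒp_integrable_mul hfstL2 hfcL2
  have hEYu : ∫ ω, f (c (X ω, X' ω)) ∂ℙ = ∫ x, f x ∂μX := by
    have h1 : ∫ q, f (c q) ∂P = ∫ ω, f (c (X ω, X' ω)) ∂ℙ := by
      rw [← hpair]
      exact integral_map hpairm.aemeasurable hfc.aestronglyMeasurable
    have h2 : ∫ x, f x ∂μX = ∫ q, f (c q) ∂P := by
      rw [← hK1]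
      exact integral_map hc.aemeasurable hf.aestronglyMeasurable
    rw [h2, h1]
  have hEYYu : ∫ ω, f (X ω) * f (c (X ω, X' ω)) ∂ℙ = ∫ x, f x * hfun x ∂μX := by
    have h1 : ∫ ω, f (X ω) * f (c (X ω, X' ω)) ∂ℙ = ∫ q, f q.1 * f (c q) ∂P := by
      rw [← hpair]
      exact (integral_map hpairm.aemeasurable
        ((hf.comp measurable_fst).mul hfc).aestronglyMeasurable).symm
    rw [h1, integral_prod _ hprodInt]
    refine integral_congr_ae (Filter.Eventually.of_forall fun x => ?_)
    show ∫ y, f x * f (c (x, y)) ∂μX = f x * hfun x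
    rw [integral_const_mul]
  have hfhInt : Integrable (fun x => f x * hfun x) μX :=
    PickFreezeAux.memℒp_integrable_mul hfL2 hhL2
  have hfhcInt : Integrable (fun q => f (c q) * hfun (c q)) P := by
    have h1 : Integrable (fun x => f x * hfun x) (Measure.map c P) := by
      rw [hK1]; exact hfhInt
    exact (integrable_map_measure (hf.mul hsm.measurable).aestronglyMeasurable
      hc.aemeasurable).1 h1
  have hEsq : ∫ x, f x * hfun x ∂μX = ∫ x, hfun x * hfun x ∂μX := by
    have h1 : ∫ x, f x * hfun x ∂μX = ∫ q, f (c q) * hfun (c q) ∂P := by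
      rw [← hK1]
      exact integral_map hc.aemeasurable (hf.mul hsm.measurable).aestronglyMeasurable
    rw [h1, integral_prod _ hfhcInt]
    refine integral_congr_ae (Filter.Eventually.of_forall fun x => ?_)
    calc ∫ y, f (c (x, y)) * hfun (c (x, y)) ∂μX
        = ∫ y, f (c (x, y)) * hfun x ∂μX := by
          refine integral_congr_ae (Filter.Eventually.of_forall fun y => ?_)
          show f (c (x, y)) * hfun (c (x, y)) = f (c (x, y)) * hfun x
          rw [hdep]
      _ = hfun x * hfun x := by rw [integral_mul_const]
  have hEh : ∫ x, hfun x ∂μX = ∫ x, f x ∂μX := by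
    have h1 : ∫ x, f x ∂μX = ∫ q, f (c q) ∂P := by
      rw [← hK1]
      exact integral_map hc.aemeasurable hf.aestronglyMeasurable
    rw [h1, integral_prod _ hfcInt]
  have hEhX : ∫ ω, hfun (X ω) ∂ℙ = ∫ x, hfun x ∂μX :=
    (integral_map hXm.aemeasurable hsm.aestronglyMeasurable).symm
  have hsm2 : StronglyMeasurable fun x => hfun x * hfun x := hsm.mul hsm
  have hEhX2 : ∫ ω, hfun (X ω) * hfun (X ω) ∂ℙ = ∫ x, hfun x * hfun x ∂μX :=
    (integral_map hXm.aemeasurable hsm2.aestronglyMeasurable).symm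
  -- restated with the statement's syntax
  have hEYu' : ∫ ω, f (fun i => if i ∈ u then X ω i else X' ω i) ∂ℙ = ∫ x, f x ∂μX := hEYu
  have hEYYu' : ∫ ω, f (X ω) * f (fun i => if i ∈ u then X ω i else X' ω i) ∂ℙ
      = ∫ x, f x * hfun x ∂μX := hEYYu
  -- conclusion
  rw [PickFreezeAux.variance_congr hcond, variance_eq_sub hhXL2]
  have e_left : (∫ ω, ((fun ω => hfun (X ω)) ^ 2) ω ∂ℙ)
      = ∫ ω, f (X ω) * f (fun i => if i ∈ u then X ω i else X' ω i) ∂ℙ := by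
    have h0 : (∫ ω, ((fun ω => hfun (X ω)) ^ 2) ω ∂ℙ) = ∫ ω, hfun (X ω) * hfun (X ω) ∂ℙ := by
      refine integral_congr_ae (Filter.Eventually.of_forall fun ω => ?_)
      simp [pow_two]
    rw [h0, hEhX2, ← hEsq, ← hEYYu']
  have e_mean : ∫ ω, hfun (X ω) ∂ℙ = ∫ ω, f (X ω) ∂ℙ := by
    rw [hEhX, hEh, hEY]
  have e_Yu : ∫ ω, f (fun i => if i ∈ u then X ω i else X' ω i) ∂ℙ = ∫ ω, f (X ω) ∂ℙ := by
    rw [hEYu', hEY]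
  show (∫ ω, ((fun ω => hfun (X ω)) ^ 2) ω ∂ℙ) - (∫ ω, hfun (X ω) ∂ℙ) ^ 2 = _
  rw [e_left, e_mean, e_Yu]
  ring
end

section
/- Let A be a real symmetric positive semidefinite q×q matrix given by A_{i,j} = σ² Σ_{u ∈ Υ} a_u N_{u,i} N_{u,j}, where σ² > 0, a is a probability distribution on Υ (subsets of {1,…,p}, q = 2^p) with min_u a_u > 0, and N = M^{-1} with N_{u,v} = 1_{v ⊆ u}. Then the smallest eigenvalue of A is at least σ² (min_u a_u) ((3-√5)/2)^p. -/
private lemma sqrt5_nonneg : (0:ℝ) ≤ Real.sqrt 5 := Real.sqrt_nonneg 5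

private lemma sqrt5_sq : Real.sqrt 5 ^ 2 = 5 := Real.sq_sqrt (by norm_num)

private lemma c_nonneg : (0:ℝ) ≤ (3 - Real.sqrt 5) / 2 := by
  nlinarith [sqrt5_sq, sqrt5_nonneg]

/-- Pointwise 2×2 inequality: smallest eigenvalue of [[2,1],[1,1]]. -/
private lemma ptwise (a b : ℝ) :
    (3 - Real.sqrt 5) / 2 * (a ^ 2 + b ^ 2) ≤ a ^ 2 + (a + b) ^ 2 := by
  nlinarith [sq_nonneg ((1 + Real.sqrt 5) * a + 2 * b), sqrt5_sq, sqrt5_nonneg]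

/-- Key lemma: the quadratic form of `NᵀN` on the subset lattice of `S` is
bounded below by `((3-√5)/2)^|S|` times the identity. -/
private lemma key {α : Type*} [DecidableEq α] (S : Finset α) (x : Finset α → ℝ) :
    ((3 - Real.sqrt 5) / 2) ^ S.card * ∑ u ∈ S.powerset, x u ^ 2 ≤
      ∑ u ∈ S.powerset, (∑ v ∈ u.powerset, x v) ^ 2 := by
  classical
  induction S using Finset.induction_on generalizing x with
  | empty => simp
  | @insert a S ha ih =>
    set c : ℝ := (3 - Real.sqrt 5) / 2 with hc
    rw [Finset.sum_powerset_insert ha, Finset.sum_powerset_insert ha,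
      Finset.card_insert_of_notMem ha, pow_succ]
    have hsplit : ∀ u ∈ S.powerset,
        (∑ v ∈ (insert a u).powerset, x v)
          = (∑ v ∈ u.powerset, x v) + ∑ v ∈ u.powerset, x (insert a v) := by
      intro u hu
      have hau : a ∉ u := fun h => ha (Finset.mem_powerset.mp hu h)
      exact Finset.sum_powerset_insert hau x
    have h1 : c * ((∑ u ∈ S.powerset, (∑ v ∈ u.powerset, x v) ^ 2)
          + ∑ u ∈ S.powerset, (∑ v ∈ u.powerset, x (insert a v)) ^ 2)
        ≤ (∑ u ∈ S.powerset, (∑ v ∈ u.powerset, x v) ^ 2)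
          + ∑ u ∈ S.powerset, (∑ v ∈ (insert a u).powerset, x v) ^ 2 := by
      rw [← Finset.sum_add_distrib, Finset.mul_sum, ← Finset.sum_add_distrib]
      refine Finset.sum_le_sum fun u hu => ?_
      rw [hsplit u hu]
      exact ptwise _ _
    have h2 : c ^ S.card * ∑ u ∈ S.powerset, x u ^ 2
        ≤ ∑ u ∈ S.powerset, (∑ v ∈ u.powerset, x v) ^ 2 := ih x
    have h3 : c ^ S.card * ∑ u ∈ S.powerset, x (insert a u) ^ 2
        ≤ ∑ u ∈ S.powerset, (∑ v ∈ u.powerset, x (insert a v)) ^ 2 :=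
      ih (fun v => x (insert a v))
    have hcn : (0:ℝ) ≤ c := c_nonneg
    nlinarith [mul_le_mul_of_nonneg_left h2 hcn, mul_le_mul_of_nonneg_left h3 hcn]

/-- Lower bound on the smallest eigenvalue of the Hessian-type matrix
`A = σ² Nᵀ diag(a) N` where `N` is the inverse Möbius matrix of the subset
lattice of `{1,…,p}`: every eigenvalue of `A` is at least
`σ² (min_u a_u) ((3-√5)/2)^p`. -/
theorem hessian_smallest_eigenvalue_bound (p : ℕ)
    (s2 : ℝ) (hs2 : 0 < s2)
    (a : Finset (Fin p) → ℝ)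
    (ha_pos : ∀ u, 0 < a u) (ha_sum : ∑ u : Finset (Fin p), a u = 1)
    (N : Matrix (Finset (Fin p)) (Finset (Fin p)) ℝ)
    (hN : ∀ u v, N u v = if v ⊆ u then (1 : ℝ) else 0)
    (A : Matrix (Finset (Fin p)) (Finset (Fin p)) ℝ)
    (hA : ∀ i j, A i j = s2 * ∑ u : Finset (Fin p), a u * N u i * N u j) :
    ∀ μ : ℝ, Module.End.HasEigenvalue (Matrix.toLin' A) μ →
      s2 * (Finset.univ.inf' Finset.univ_nonempty a) *
        ((3 - Real.sqrt 5) / 2) ^ p ≤ μ := by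
  intro μ hμ
  classical
  set c : ℝ := (3 - Real.sqrt 5) / 2 with hc
  set amin : ℝ := Finset.univ.inf' Finset.univ_nonempty a with hamin
  obtain ⟨v, hv⟩ := hμ.exists_hasEigenvector
  have hveq : A.mulVec v = μ • v := by
    have := hv.apply_eq_smul
    rwa [Matrix.toLin'_apply] at this
  have hvne : v ≠ 0 := hv.right
  -- positivity of ‖v‖²
  obtain ⟨i0, hi0⟩ : ∃ i, v i ≠ 0 := by
    by_contra h
    push_neg at h
    exact hvne (funext h)
  have hE : (0:ℝ) < ∑ i, v i ^ 2 :=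
    Finset.sum_pos' (fun i _ => sq_nonneg _)
      ⟨i0, Finset.mem_univ i0, by positivity⟩
  -- the transformed vector
  set y : Finset (Fin p) → ℝ := fun u => ∑ j ∈ u.powerset, v j with hy
  have hNy : ∀ u, (∑ i, N u i * v i) = y u := by
    intro u
    show _ = ∑ j ∈ u.powerset, v j
    rw [show u.powerset = Finset.univ.filter (· ⊆ u) by
      ext w; simp [Finset.mem_powerset]]
    rw [Finset.sum_filter]
    refine Finset.sum_congr rfl fun i _ => ?_
    rw [hN]
    by_cases h : i ⊆ u <;> simp [h]
  -- quadratic form identity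
  have hquad : μ * ∑ i, v i ^ 2 = s2 * ∑ u, a u * y u ^ 2 := by
    have lhs : μ * ∑ i, v i ^ 2 = ∑ i, v i * (A.mulVec v) i := by
      rw [hveq, Finset.mul_sum]
      exact Finset.sum_congr rfl fun i _ => by
        simp [Pi.smul_apply, smul_eq_mul]; ring
    rw [lhs]
    calc ∑ i, v i * (A.mulVec v) i
        = ∑ i, ∑ j, ∑ u, s2 * (a u * (N u i * v i) * (N u j * v j)) := by
          refine Finset.sum_congr rfl fun i _ => ?_
          simp only [Matrix.mulVec, dotProduct]
          rw [Finset.mul_sum]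
          refine Finset.sum_congr rfl fun j _ => ?_
          rw [hA]
          simp only [Finset.mul_sum, Finset.sum_mul]
          exact Finset.sum_congr rfl fun u _ => by ring
      _ = ∑ i, ∑ u, ∑ j, s2 * (a u * (N u i * v i) * (N u j * v j)) :=
          Finset.sum_congr rfl fun i _ => Finset.sum_comm
      _ = ∑ u, ∑ i, ∑ j, s2 * (a u * (N u i * v i) * (N u j * v j)) :=
          Finset.sum_comm
      _ = s2 * ∑ u, a u * y u ^ 2 := by
          rw [Finset.mul_sum]
          refine Finset.sum_congr rfl fun u _ => ?_
          rw [← hNy u]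
          rw [show (∑ i, N u i * v i) ^ 2
              = ∑ i, ∑ j, (N u i * v i) * (N u j * v j) by
            rw [sq, Finset.sum_mul_sum]]
          rw [Finset.mul_sum, Finset.mul_sum]
          refine Finset.sum_congr rfl fun i _ => ?_
          rw [Finset.mul_sum, Finset.mul_sum]
          exact Finset.sum_congr rfl fun j _ => by ring
  -- lower bound the quadratic form
  have hamin_le : ∀ u, amin ≤ a u := fun u =>
    Finset.inf'_le a (Finset.mem_univ u)
  have hamin_pos : 0 < amin := by
    rw [hamin, Finset.lt_inf'_iff]
    exact fun u _ => ha_pos u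
  have hb1 : amin * ∑ u, y u ^ 2 ≤ ∑ u, a u * y u ^ 2 := by
    rw [Finset.mul_sum]
    exact Finset.sum_le_sum fun u _ =>
      mul_le_mul_of_nonneg_right (hamin_le u) (sq_nonneg _)
  have hb2 : c ^ p * ∑ i, v i ^ 2 ≤ ∑ u, y u ^ 2 := by
    have := key (Finset.univ : Finset (Fin p)) v
    simpa [Finset.powerset_univ, Finset.card_univ] using this
  have final : (s2 * amin * c ^ p) * ∑ i, v i ^ 2 ≤ μ * ∑ i, v i ^ 2 := by
    rw [hquad]
    calc (s2 * amin * c ^ p) * ∑ i, v i ^ 2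
        = s2 * (amin * (c ^ p * ∑ i, v i ^ 2)) := by ring
      _ ≤ s2 * (amin * ∑ u, y u ^ 2) := by
          refine mul_le_mul_of_nonneg_left ?_ hs2.le
          exact mul_le_mul_of_nonneg_left hb2 hamin_pos.le
      _ ≤ s2 * ∑ u, a u * y u ^ 2 :=
          mul_le_mul_of_nonneg_left hb1 hs2.le
  exact le_of_mul_le_mul_right final hE
end
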